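/- arXiv:1509.06611 — 2 statements merged into one kernel-verified Lean document; each statement's English description precedes it below -/
import Mathlib

section
/- Idle region of the optimal policy (Theorem 1, Property 1): let V : 𝒬 → ℝ be monotone and let 𝟎 denote the all-idle action (0,…,0) ∈ 𝒰. If Q ∈ 𝒬 satisfies Q_{n,m} ≤ φ_𝟎⁺(Q_{−n,−m}) for every (n,m) ∈ I, then Δ_{𝟎,v}(Q) ≤ 0 for every v ∈ 𝒰; in particular the idle action 𝟎 attains min_{u∈𝒰} J_V(Q,u), i.e., the optimal multicast scheduling decision at Q is to keep all BSs idle. -/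
open Finset

namespace HetNet

/-- The queue index set `I = {(n,m) : 0 ≤ n ≤ N, m ∈ M_n}`. -/
abbrev Idx {N M : ℕ} (cache : Fin (N + 1) → Finset (Fin M)) : Type :=
  {p : Fin (N + 1) × Fin M // p.2 ∈ cache p.1}

/-- The feasible action space `𝒰`: each BS schedules a cached content or idles (`none`),
and the MBS (BS `0`) and the SBSs do not operate concurrently. -/
def Feasible {N M : ℕ} (cache : Fin (N + 1) → Finset (Fin M))
    (u : Fin (N + 1) → Option (Fin M)) : Prop :=
  (∀ n m, u n = some m → m ∈ cache n) ∧ (u 0 ≠ none → ∀ n, n ≠ 0 → u n = none)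

instance {N M : ℕ} (cache : Fin (N + 1) → Finset (Fin M)) :
    DecidablePred (Feasible cache) := by
  intro u; unfold Feasible; infer_instance

instance {N M : ℕ} (cache : Fin (N + 1) → Finset (Fin M)) :
    Nonempty {u : Fin (N + 1) → Option (Fin M) // Feasible cache u} :=
  ⟨⟨fun _ => none, by unfold Feasible; simp⟩⟩

/-- Queue `(n,m)` is served by action `u`. -/
def Served {N M : ℕ} (u : Fin (N + 1) → Option (Fin M)) (n : Fin (N + 1)) (m : Fin M) : Prop :=
  (n = 0 ∧ u 0 = some m) ∨ (n ≠ 0 ∧ (u 0 = some m ∨ u n = some m))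

instance {N M : ℕ} (u : Fin (N + 1) → Option (Fin M)) (n : Fin (N + 1)) (m : Fin M) :
    Decidable (Served u n m) := by unfold Served; infer_instance

/-- The queue transition map `T(Q,u,A)`. -/
def T {N M : ℕ} {cache : Fin (N + 1) → Finset (Fin M)} (bound : Idx cache → ℕ)
    (Q : Idx cache → ℕ) (u : Fin (N + 1) → Option (Fin M)) (A : Idx cache → ℕ) :
    Idx cache → ℕ := fun i =>
  if Served u i.val.1 i.val.2 then min (A i) (bound i) else min (Q i + A i) (bound i)

/-- The network power cost `p(u) = Σ_n p(n, u_n)` (with `p(n,0) = 0` for an idling BS). -/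
def pcost {N M : ℕ} (p : Fin (N + 1) → Fin M → ℝ) (u : Fin (N + 1) → Option (Fin M)) : ℝ :=
  ∑ n, (u n).elim 0 (p n)

/-- The sum request queue length `d(Q)`. -/
def dcost {N M : ℕ} {cache : Fin (N + 1) → Finset (Fin M)} (Q : Idx cache → ℕ) : ℝ :=
  ∑ i, (Q i : ℝ)

/-- The per-stage cost `g(Q,u) = d(Q) + w·p(u)`. -/
def gcost {N M : ℕ} (p : Fin (N + 1) → Fin M → ℝ) (w : ℝ)
    {cache : Fin (N + 1) → Finset (Fin M)}
    (Q : Idx cache → ℕ) (u : Fin (N + 1) → Option (Fin M)) : ℝ :=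
  dcost Q + w * pcost p u

/-- The state-action cost `J_V(Q,u) = g(Q,u) + Σ_{A∈𝒜} P(A)·V(T(Q,u,A))`. -/
def Jcost {N M : ℕ} (p : Fin (N + 1) → Fin M → ℝ) (w : ℝ)
    {cache : Fin (N + 1) → Finset (Fin M)} (bound : Idx cache → ℕ)
    {ι : Type} [Fintype ι] (P : ι → ℝ) (A : ι → Idx cache → ℕ)
    (V : (Idx cache → ℕ) → ℝ) (Q : Idx cache → ℕ)
    (u : Fin (N + 1) → Option (Fin M)) : ℝ :=
  gcost p w Q u + ∑ a, P a * V (T bound Q u (A a))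

open scoped Classical in
/-- `Φ_u(Q_{−n,−m})`: the set of queue lengths `q ∈ {0,…,N_{n,m}}` at coordinate `i = (n,m)`
such that action `u` dominates every other feasible action at the state obtained from `Q`
by replacing its `(n,m)`-coordinate with `q`.  Its `Finset.max` (valued in `WithBot ℕ`,
`⊥` = −∞) is `φ_u⁺(Q_{−n,−m})`, and its `Finset.min` (valued in `WithTop ℕ`, `⊤` = +∞)
is `φ_u⁻(Q_{−n,−m})`. -/
noncomputable def Phi {N M : ℕ} (p : Fin (N + 1) → Fin M → ℝ) (w : ℝ)
    {cache : Fin (N + 1) → Finset (Fin M)} (bound : Idx cache → ℕ)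
    {ι : Type} [Fintype ι] (P : ι → ℝ) (A : ι → Idx cache → ℕ)
    (V : (Idx cache → ℕ) → ℝ) (u : Fin (N + 1) → Option (Fin M))
    (i : Idx cache) (Q : Idx cache → ℕ) : Finset ℕ :=
  (Finset.range (bound i + 1)).filter fun q =>
    ∀ v, Feasible cache v → v ≠ u →
      Jcost p w bound P A V (Function.update Q i q) u -
        Jcost p w bound P A V (Function.update Q i q) v ≤ 0

/-- Theorem 1, Property 1: idle region of the optimal policy: let `V` be
monotone and `𝟎` the all-idle action.  If `Q ∈ 𝒬` satisfies `Q_{n,m} ≤ φ_𝟎⁺(Q_{−n,−m})` for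
every `(n,m) ∈ I`, then `Δ_{𝟎,v}(Q) ≤ 0` for every `v ∈ 𝒰`; in particular the idle action
attains `min_{u∈𝒰} J_V(Q,u)`. -/
theorem optimal_idle_region {N M : ℕ} (cache : Fin (N + 1) → Finset (Fin M))
    (hcache0 : ∀ m : Fin M, m ∈ cache 0)
    (bound : Idx cache → ℕ)
    (p : Fin (N + 1) → Fin M → ℝ) (hp : ∀ n m, 0 ≤ p n m)
    (w : ℝ) (hw : 0 ≤ w)
    {ι : Type} [Fintype ι] (P : ι → ℝ) (A : ι → Idx cache → ℕ)
    (hP : ∀ a, 0 ≤ P a) (hPsum : ∑ a, P a = 1)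
    (V : (Idx cache → ℕ) → ℝ)
    (hV : ∀ Q₁ Q₂ : Idx cache → ℕ, (∀ i, Q₁ i ≤ bound i) → (∀ i, Q₂ i ≤ bound i) →
      (∀ i, Q₁ i ≤ Q₂ i) → V Q₁ ≤ V Q₂)
    (Q : Idx cache → ℕ) (hQ : ∀ i, Q i ≤ bound i)
    (hidle : ∀ i : Idx cache,
      (Q i : WithBot ℕ) ≤ (Phi p w bound P A V (fun _ => none) i Q).max) :
    (∀ v, Feasible cache v →
        Jcost p w bound P A V Q (fun _ => none) - Jcost p w bound P A V Q v ≤ 0) ∧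
      Jcost p w bound P A V Q (fun _ => none) =
        ⨅ u : {u // Feasible cache u}, Jcost p w bound P A V Q u.val := by
  classical
  have main : ∀ v, Feasible cache v →
      Jcost p w bound P A V Q (fun _ => none) - Jcost p w bound P A V Q v ≤ 0 := by
    intro v hv
    by_cases hv0 : v = fun _ => none
    · subst hv0; simp
    · -- find a coordinate served by v
      obtain ⟨n, m, hnm⟩ : ∃ n m, v n = some m := by
        by_contra h
        push_neg at h
        apply hv0; funext n
        cases h' : v n with
        | none => rfl
        | some m => exact absurd h' (h n m)
      have hmc : m ∈ cache n := hv.1 n m hnm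
      set i : Idx cache := ⟨(n, m), hmc⟩ with hi
      have hserved : Served v i.val.1 i.val.2 := by
        by_cases hn0 : n = 0
        · exact Or.inl ⟨hn0, hn0 ▸ hnm⟩
        · exact Or.inr ⟨hn0, Or.inr hnm⟩
      -- extract the maximizer of Phi
      have hidlei := hidle i
      have hne : (Phi p w bound P A V (fun _ => none) i Q).max ≠ ⊥ := by
        intro h; rw [h] at hidlei; exact absurd hidlei (by simp)
      obtain ⟨b, hbmax⟩ := Option.ne_none_iff_exists'.mp hne
      have hbmem : b ∈ Phi p w bound P A V (fun _ => none) i Q :=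
        Finset.mem_of_max hbmax
      have hQb : Q i ≤ b := by
        rw [hbmax] at hidlei; exact WithBot.coe_le_coe.mp hidlei
      rw [Phi, Finset.mem_filter, Finset.mem_range] at hbmem
      have hbb : b ≤ bound i := Nat.lt_succ_iff.mp hbmem.1
      set Q' : Idx cache → ℕ := Function.update Q i b with hQ'def
      have hdom : Jcost p w bound P A V Q' (fun _ => none) -
          Jcost p w bound P A V Q' v ≤ 0 := hbmem.2 v hv hv0
      -- basic facts about Q'
      have hQQ' : ∀ j, Q j ≤ Q' j := by
        intro j
        by_cases hj : j = i
        · subst hj; simp [hQ'def, hQb]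
        · simp [hQ'def, Function.update_of_ne hj]
      have hQ'b : ∀ j, Q' j ≤ bound j := by
        intro j
        by_cases hj : j = i
        · subst hj; simp [hQ'def, hbb]
        · simp [hQ'def, Function.update_of_ne hj, hQ j]
      -- T under v is the same from Q and Q'
      have hTv : ∀ a, T bound Q' v (A a) = T bound Q v (A a) := by
        intro a; funext j
        by_cases hs : Served v j.val.1 j.val.2
        · simp [T, hs]
        · have hj : j ≠ i := by
            intro h; exact hs (h ▸ hserved)
          simp [T, hs, hQ'def, Function.update_of_ne hj]
      -- monotonicity of the transition under idle
      have hT0 : ∀ a j, T bound Q (fun _ => none) (A a) j ≤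
          T bound Q' (fun _ => none) (A a) j := by
        intro a j
        have hns : ¬ Served (fun _ : Fin (N + 1) => none) j.val.1 j.val.2 := by
          simp [Served]
        simp only [T, if_neg hns]
        exact min_le_min (Nat.add_le_add_right (hQQ' j) _) le_rfl
      have hTb : ∀ (R : Idx cache → ℕ) (u : Fin (N + 1) → Option (Fin M)) a j,
          T bound R u (A a) j ≤ bound j := by
        intro R u a j
        unfold T
        split <;> exact min_le_right _ _
      -- key inequality: Δ(Q) ≤ Δ(Q')
      have hkey : Jcost p w bound P A V Q (fun _ => none) - Jcost p w bound P A V Q v ≤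
          Jcost p w bound P A V Q' (fun _ => none) - Jcost p w bound P A V Q' v := by
        have hsum : ∑ a, P a * V (T bound Q (fun _ => none) (A a)) ≤
            ∑ a, P a * V (T bound Q' (fun _ => none) (A a)) := by
          apply Finset.sum_le_sum
          intro a _
          exact mul_le_mul_of_nonneg_left
            (hV _ _ (hTb Q _ a) (hTb Q' _ a) (hT0 a)) (hP a)
        have hsv : ∑ a, P a * V (T bound Q' v (A a)) =
            ∑ a, P a * V (T bound Q v (A a)) := by
          apply Finset.sum_congr rfl
          intro a _
          rw [hTv a]
        simp only [Jcost, gcost]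
        rw [hsv]
        linarith
      linarith
  refine ⟨main, ?_⟩
  have hFin : Finite {u : Fin (N + 1) → Option (Fin M) // Feasible cache u} := by
    infer_instance
  set u0 : {u : Fin (N + 1) → Option (Fin M) // Feasible cache u} :=
    ⟨fun _ => none, by unfold Feasible; simp⟩ with hu0
  apply le_antisymm
  · apply le_ciInf
    intro u
    have := main u.1 u.2
    linarith
  · exact ciInf_le (Set.Finite.bddBelow (Set.finite_range _)) u0

end HetNet
end

section
/- Monotonicity of the per-queue relative value iteration iterates (equation (44) in the proof of Theorem 2): fix (n,m) ∈ I, a randomized base policy π on 𝒰, and a reference value q† ∈ {0,…,N_{n,m}}. Define V̂⁰_{n,m}(q) = 0, Ĵ^{l+1}_{n,m}(q) = Σ_{u∈𝒰} π(u)·[ g_{n,m}(q,u) + Σ_{A∈𝒜} P(A)·V̂^l_{n,m}(T_{n,m}(q,u,A_{n,m})) ], and V̂^{l+1}_{n,m}(q) = Ĵ^{l+1}_{n,m}(q) − Ĵ^{l+1}_{n,m}(q†). Then for every l ≥ 0 and all q¹ ≤ q² in {0,…,N_{n,m}}, V̂^l_{n,m}(q¹) ≤ V̂^l_{n,m}(q²);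 i.e., every per-queue iterate is non-decreasing. -/
open Finset

namespace HetNet

/-- The per-queue transition map `T_{n,m}(q,u,a)`. -/
def Tq {N M : ℕ} {cache : Fin (N + 1) → Finset (Fin M)} (bound : Idx cache → ℕ)
    (i : Idx cache) (q : ℕ) (u : Fin (N + 1) → Option (Fin M)) (a : ℕ) : ℕ :=
  if Served u i.val.1 i.val.2 then min a (bound i) else min (q + a) (bound i)

/-- equation (44): monotonicity of the per-queue RVIA iterates: fix
`(n,m) ∈ I`, a randomized base policy `π` on `𝒰` and a reference value
`q† ∈ {0,…,N_{n,m}}`; define `V̂⁰_{n,m} ≡ 0` and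
`V̂^{l+1}_{n,m}(q) = Ĵ^{l+1}_{n,m}(q) − Ĵ^{l+1}_{n,m}(q†)`.  Then every per-queue iterate
`V̂^l_{n,m}` is non-decreasing on `{0,…,N_{n,m}}`. -/
theorem per_queue_rvia_monotone {N M : ℕ} (cache : Fin (N + 1) → Finset (Fin M))
    (hcache0 : ∀ m : Fin M, m ∈ cache 0)
    (bound : Idx cache → ℕ)
    (p : Fin (N + 1) → Fin M → ℝ) (hp : ∀ n m, 0 ≤ p n m)
    (w : ℝ) (hw : 0 ≤ w)
    {ι : Type} [Fintype ι] (P : ι → ℝ) (A : ι → Idx cache → ℕ)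
    (hP : ∀ a, 0 ≤ P a) (hPsum : ∑ a, P a = 1)
    (i : Idx cache)
    (π : {u : Fin (N + 1) → Option (Fin M) // Feasible cache u} → ℝ)
    (hπ : ∀ u, 0 ≤ π u) (hπsum : ∑ u, π u = 1)
    (qd : ℕ) (hqd : qd ≤ bound i)
    (Vs : ℕ → ℕ → ℝ)
    (h0 : ∀ q, Vs 0 q = 0)
    (hrec : ∀ l : ℕ, ∀ q ≤ bound i, Vs (l + 1) q =
      (∑ u : {u : Fin (N + 1) → Option (Fin M) // Feasible cache u}, π u *
          (((q : ℝ) + w * (if u.val i.val.1 = some i.val.2 then p i.val.1 i.val.2 else 0)) +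
            ∑ a, P a * Vs l (Tq bound i q u.val (A a i)))) -
        (∑ u : {u : Fin (N + 1) → Option (Fin M) // Feasible cache u}, π u *
          (((qd : ℝ) + w * (if u.val i.val.1 = some i.val.2 then p i.val.1 i.val.2 else 0)) +
            ∑ a, P a * Vs l (Tq bound i qd u.val (A a i))))) :
    ∀ l : ℕ, ∀ q₁ q₂ : ℕ, q₁ ≤ bound i → q₂ ≤ bound i → q₁ ≤ q₂ → Vs l q₁ ≤ Vs l q₂ := by
  intro l
  induction l with
  | zero => intro q₁ q₂ _ _ _; simp [h0]
  | succ l ih =>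
    intro q₁ q₂ h₁ h₂ hle
    rw [hrec l q₁ h₁, hrec l q₂ h₂]
    apply sub_le_sub_right
    apply Finset.sum_le_sum
    intro u _
    apply mul_le_mul_of_nonneg_left _ (hπ u)
    apply add_le_add
    · exact add_le_add (by exact_mod_cast hle) le_rfl
    · apply Finset.sum_le_sum
      intro a _
      apply mul_le_mul_of_nonneg_left _ (hP a)
      apply ih
      · unfold Tq; split <;> exact min_le_right _ _
      · unfold Tq; split <;> exact min_le_right _ _
      · unfold Tq
        split
        · exact le_rfl
        · exact min_le_min (Nat.add_le_add_right hle _) le_rfl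

end HetNet
end
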